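/- Let Λ_K = ℤ⁷ carry the symmetric bilinear form q(x,y) = Σ_{i=0}^{2} (x_{2i}·y_{2i+1} + x_{2i+1}·y_{2i}) - 6·x₆·y₆ (the orthogonal direct sum U³ ⊕ ⟨-6⟩, i.e. the Beauville–Bogomolov–Fujiki lattice of a hyperkähler fourfold of Kummer type). Let h ∈ Λ_K be primitive with e := q(h,h) > 0, and let i := div(h) be the nonnegative generator of the subgroup {q(h,x) : x ∈ Λ_K} of ℤ. Then one of the following holds: (1) i = 1 and e ≡ 0 (mod 2); (2) i = 2 and e ≡ -6 (mod 8); (3) i = 3 and e ≡ -6 (mod 18); (4) i = 6 and e ≡ -6 (mod 72). -/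

import Mathlib

/-- The Beauville–Bogomolov–Fujiki pairing of a hyperkähler fourfold of Kummer type
on `ℤ⁷`, i.e. the lattice `U³ ⊕ ⟨-6⟩`:
`q(x,y) = Σ_{i=0}^{2} (x_{2i}·y_{2i+1} + x_{2i+1}·y_{2i}) - 6·x₆·y₆`. -/
def bbfKummerForm (x y : Fin 7 → ℤ) : ℤ :=
  (x 0 * y 1 + x 1 * y 0) + (x 2 * y 3 + x 3 * y 2) +
  (x 4 * y 5 + x 5 * y 4) - 6 * x 6 * y 6

/-- An element of a free `ℤ`-module is primitive if it is not `k • u` with `k ≥ 2`. -/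
def IsPrimitiveKummer (v : Fin 7 → ℤ) : Prop :=
  ¬ ∃ (k : ℤ) (u : Fin 7 → ℤ), 2 ≤ k ∧ v = k • u

/-- **Squares and divisibilities of polarizations of hyperkähler fourfolds of Kummer
type** (Subsection 1.2 of the paper).  If `h` is primitive in `U³ ⊕ ⟨-6⟩` with
`e := q(h,h) > 0` and divisibility `i` (the nonnegative generator of `q(h, Λ)`),
then either `i = 1` and `e ≡ 0 (mod 2)`, or `i = 2` and `e ≡ -6 (mod 8)`, or `i = 3`
and `e ≡ -6 (mod 18)`, or `i = 6` and `e ≡ -6 (mod 72)`. -/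
theorem kummer_polarization_square_divisibility
    (h : Fin 7 → ℤ) (hprim : IsPrimitiveKummer h)
    (e : ℤ) (he : e = bbfKummerForm h h) (hepos : 0 < e)
    (i : ℤ) (hi0 : 0 ≤ i)
    (higen : AddSubgroup.zmultiples i =
      AddSubgroup.closure {t : ℤ | ∃ x : Fin 7 → ℤ, t = bbfKummerForm h x}) :
    (i = 1 ∧ e ≡ 0 [ZMOD 2]) ∨ (i = 2 ∧ e ≡ -6 [ZMOD 8]) ∨
    (i = 3 ∧ e ≡ -6 [ZMOD 18]) ∨ (i = 6 ∧ e ≡ -6 [ZMOD 72]) := by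
  -- i divides every value of the form
  have hS : ∀ x : Fin 7 → ℤ, i ∣ bbfKummerForm h x := by
    intro x
    have hmem : bbfKummerForm h x ∈
        AddSubgroup.closure {t : ℤ | ∃ x : Fin 7 → ℤ, t = bbfKummerForm h x} :=
      AddSubgroup.subset_closure ⟨x, rfl⟩
    rw [← higen, AddSubgroup.mem_zmultiples_iff] at hmem
    obtain ⟨k, hk⟩ := hmem
    exact ⟨k, by rw [← hk, smul_eq_mul, mul_comm]⟩
  -- divisibility of the coordinates
  have d0 : i ∣ h 0 := by
    have := hS (fun j => if j = 1 then 1 else 0); simpa [bbfKummerForm] using this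
  have d1 : i ∣ h 1 := by
    have := hS (fun j => if j = 0 then 1 else 0); simpa [bbfKummerForm] using this
  have d2 : i ∣ h 2 := by
    have := hS (fun j => if j = 3 then 1 else 0); simpa [bbfKummerForm] using this
  have d3 : i ∣ h 3 := by
    have := hS (fun j => if j = 2 then 1 else 0); simpa [bbfKummerForm] using this
  have d4 : i ∣ h 4 := by
    have := hS (fun j => if j = 5 then 1 else 0); simpa [bbfKummerForm] using this
  have d5 : i ∣ h 5 := by
    have := hS (fun j => if j = 4 then 1 else 0); simpa [bbfKummerForm] using this
  have d6 : i ∣ 6 * h 6 := by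
    have := hS (fun j => if j = 6 then 1 else 0)
    have h' : bbfKummerForm h (fun j => if j = 6 then 1 else 0) = -(6 * h 6) := by
      simp [bbfKummerForm]
    rw [h'] at this
    exact (dvd_neg).mp this
  -- primitivity, reformulated
  have hprim' : ∀ k : ℤ, 2 ≤ k → k ∣ h 0 → k ∣ h 1 → k ∣ h 2 → k ∣ h 3 → k ∣ h 4 →
      k ∣ h 5 → k ∣ h 6 → False := by
    intro k hk k0 k1 k2 k3 k4 k5 k6
    apply hprim
    refine ⟨k, fun j => h j / k, hk, ?_⟩
    funext j
    have : ∀ j : Fin 7, k ∣ h j := by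
      intro j
      fin_cases j <;> assumption
    exact (Int.mul_ediv_cancel' (this j)).symm
  -- i ≠ 0
  have hie : i ∣ e := he ▸ hS h
  have hine : i ≠ 0 := by
    rintro rfl
    rw [zero_dvd_iff] at hie
    omega
  -- gcd(i, h 6) = 1
  have hg1 : Int.gcd i (h 6) = 1 := by
    by_contra hg
    have hg0 : Int.gcd i (h 6) ≠ 0 := by
      intro h0'
      rw [Int.gcd_eq_zero_iff] at h0'
      exact hine h0'.1
    have hg2 : 2 ≤ (Int.gcd i (h 6) : ℤ) := by omega
    exact hprim' _ hg2 (dvd_trans (Int.gcd_dvd_left i (h 6)) d0) (dvd_trans (Int.gcd_dvd_left i (h 6)) d1)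
      (dvd_trans (Int.gcd_dvd_left i (h 6)) d2) (dvd_trans (Int.gcd_dvd_left i (h 6)) d3)
      (dvd_trans (Int.gcd_dvd_left i (h 6)) d4) (dvd_trans (Int.gcd_dvd_left i (h 6)) d5) (Int.gcd_dvd_right i (h 6))
  have hcop : IsCoprime i (h 6) := Int.isCoprime_iff_gcd_eq_one.mpr hg1
  have hdvd6 : i ∣ 6 := hcop.dvd_of_dvd_mul_right d6
  have h1i : 1 ≤ i := by omega
  have h6i : i ≤ 6 := Int.le_of_dvd (by norm_num) hdvd6
  interval_cases i
  · -- i = 1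
    refine Or.inl ⟨rfl, ?_⟩
    have h2 : (2:ℤ) ∣ e :=
      ⟨h 0 * h 1 + h 2 * h 3 + h 4 * h 5 - 3 * (h 6 * h 6), by
        rw [he]; simp only [bbfKummerForm]; ring⟩
    show e % 2 = 0 % 2
    omega
  · -- i = 2
    refine Or.inr (Or.inl ⟨rfl, ?_⟩)
    have hnd : ¬ (2:ℤ) ∣ h 6 := fun hc =>
      hprim' 2 (by norm_num) d0 d1 d2 d3 d4 d5 hc
    obtain ⟨b0, hb0⟩ := d0; obtain ⟨b1, hb1⟩ := d1; obtain ⟨b2, hb2⟩ := d2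
    obtain ⟨b3, hb3⟩ := d3; obtain ⟨b4, hb4⟩ := d4; obtain ⟨b5, hb5⟩ := d5
    obtain ⟨m, hm⟩ : ∃ m, h 6 = 2 * m + 1 := ⟨h 6 / 2, by omega⟩
    obtain ⟨c, hc⟩ := Int.even_mul_succ_self m
    have hp : h 6 * h 6 = 8 * c + 1 := by rw [hm]; linear_combination 4 * hc
    have he2 : e = 8 * (b0 * b1 + b2 * b3 + b4 * b5) - 6 * (h 6 * h 6) := by
      rw [he]; simp only [bbfKummerForm]; rw [hb0, hb1, hb2, hb3, hb4, hb5]; ring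
    rw [hp] at he2
    show e % 8 = (-6) % 8
    omega
  · -- i = 3
    refine Or.inr (Or.inr (Or.inl ⟨rfl, ?_⟩))
    have hnd : ¬ (3:ℤ) ∣ h 6 := fun hc =>
      hprim' 3 (by norm_num) d0 d1 d2 d3 d4 d5 hc
    obtain ⟨b0, hb0⟩ := d0; obtain ⟨b1, hb1⟩ := d1; obtain ⟨b2, hb2⟩ := d2
    obtain ⟨b3, hb3⟩ := d3; obtain ⟨b4, hb4⟩ := d4; obtain ⟨b5, hb5⟩ := d5
    obtain ⟨m, hm⟩ : ∃ m, h 6 = 3 * m + 1 ∨ h 6 = 3 * m + 2 := ⟨h 6 / 3, by omega⟩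
    have hq : ∃ q, h 6 * h 6 = 3 * q + 1 := by
      rcases hm with hm | hm
      · exact ⟨3 * (m * m) + 2 * m, by rw [hm]; ring⟩
      · exact ⟨3 * (m * m) + 4 * m + 1, by rw [hm]; ring⟩
    obtain ⟨q, hq⟩ := hq
    have he2 : e = 18 * (b0 * b1 + b2 * b3 + b4 * b5) - 6 * (h 6 * h 6) := by
      rw [he]; simp only [bbfKummerForm]; rw [hb0, hb1, hb2, hb3, hb4, hb5]; ring
    rw [hq] at he2
    show e % 18 = (-6) % 18
    omega
  · -- i = 4 : impossible
    exfalso; norm_num at hdvd6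
  · -- i = 5 : impossible
    exfalso; norm_num at hdvd6
  · -- i = 6
    refine Or.inr (Or.inr (Or.inr ⟨rfl, ?_⟩))
    have hnd2 : ¬ (2:ℤ) ∣ h 6 := fun hc =>
      hprim' 2 (by norm_num) (dvd_trans (by norm_num) d0) (dvd_trans (by norm_num) d1)
        (dvd_trans (by norm_num) d2) (dvd_trans (by norm_num) d3)
        (dvd_trans (by norm_num) d4) (dvd_trans (by norm_num) d5) hc
    have hnd3 : ¬ (3:ℤ) ∣ h 6 := fun hc =>
      hprim' 3 (by norm_num) (dvd_trans (by norm_num) d0) (dvd_trans (by norm_num) d1)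
        (dvd_trans (by norm_num) d2) (dvd_trans (by norm_num) d3)
        (dvd_trans (by norm_num) d4) (dvd_trans (by norm_num) d5) hc
    obtain ⟨b0, hb0⟩ := d0; obtain ⟨b1, hb1⟩ := d1; obtain ⟨b2, hb2⟩ := d2
    obtain ⟨b3, hb3⟩ := d3; obtain ⟨b4, hb4⟩ := d4; obtain ⟨b5, hb5⟩ := d5
    obtain ⟨m, hm⟩ : ∃ m, h 6 = 2 * m + 1 := ⟨h 6 / 2, by omega⟩
    obtain ⟨c, hc⟩ := Int.even_mul_succ_self m
    have hp : h 6 * h 6 = 8 * c + 1 := by rw [hm]; linear_combination 4 * hc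
    obtain ⟨m', hm'⟩ : ∃ m', h 6 = 3 * m' + 1 ∨ h 6 = 3 * m' + 2 := ⟨h 6 / 3, by omega⟩
    have hq : ∃ q, h 6 * h 6 = 3 * q + 1 := by
      rcases hm' with hm' | hm'
      · exact ⟨3 * (m' * m') + 2 * m', by rw [hm']; ring⟩
      · exact ⟨3 * (m' * m') + 4 * m' + 1, by rw [hm']; ring⟩
    obtain ⟨q, hq⟩ := hq
    have he2 : e = 72 * (b0 * b1 + b2 * b3 + b4 * b5) - 6 * (h 6 * h 6) := by
      rw [he]; simp only [bbfKummerForm]; rw [hb0, hb1, hb2, hb3, hb4, hb5]; ring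
    rw [hp] at he2
    rw [hp] at hq
    show e % 72 = (-6) % 72
    omega
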